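/- arXiv:0906.2687 — 2 statements merged into one kernel-verified Lean document; each statement's English description precedes it below -/
import Mathlib

section
/- Let A be a finite nonempty set and T a symmetric, irreflexive, saturated relation on A. If Q, Q₁, Q₂ ∈ 𝒫^T(A) satisfy Q₁ ⊆ Q^T and Q₂ ⊆ (((Q ∪ Q₁)^T)^T)^T, then Q₂ ⊆ Q₁^T, Q ⊆ (((Q₁ ∪ Q₂)^T)^T)^T, and ((((Q ∪ Q₁)^T)^T ∪ Q₂)^T)^T = ((Q ∪ Q₁ ∪ Q₂)^T)^T = ((Q ∪ ((Q₁ ∪ Q₂)^T)^T)^T)^T; i.e. the partial operation Q ⊕ Q₁ := ((Q ∪ Q₁)^T)^T on 𝒫^T(A) is associative. -/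
/-- For `B ⊆ A`, `B^T := {l ∈ A | ∀ l₁ ∈ B, (l₁, l) ∈ T}`. -/
def polar {α : Type*} (T : α → α → Prop) (B : Set α) : Set α :=
  {l | ∀ l₁ ∈ B, T l₁ l}

/-- `𝒫_T(A)`: subsets whose distinct elements are pairwise related by `T`. -/
def PTset {α : Type*} (T : α → α → Prop) : Set (Set α) :=
  {U | ∀ l ∈ U, ∀ l₁ ∈ U, l₁ ≠ l → T l l₁}

/-- `𝒫^T(A)`: the image of `𝒫_T(A)` under `B ↦ B^T`. -/
def PTup {α : Type*} (T : α → α → Prop) : Set (Set α) :=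
  polar T '' PTset T

/-- `T` is symmetric: for all `l ≠ l₁`, `(l, l₁) ∈ T ↔ (l₁, l) ∈ T`. -/
def SymmRel {α : Type*} (T : α → α → Prop) : Prop :=
  ∀ l l₁, l ≠ l₁ → (T l l₁ ↔ T l₁ l)

/-- `T` is irreflexive. -/
def IrreflRel {α : Type*} (T : α → α → Prop) : Prop :=
  ∀ l, ¬ T l l

/-- `M` is a maximal element of `𝒫_T(A)` with respect to inclusion. -/
def MaxPT {α : Type*} (T : α → α → Prop) (M : Set α) : Prop :=
  M ∈ PTset T ∧ ∀ M' ∈ PTset T, M ⊆ M' → M' = M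

/-- `T` is saturated: for every maximal `M ∈ 𝒫_T(A)` and every `B ⊆ M`,
`B^T = ((M \ B)^T)^T`. -/
def SaturatedRel {α : Type*} (T : α → α → Prop) : Prop :=
  ∀ M, MaxPT T M → ∀ B ⊆ M, polar T B = polar T (polar T (M \ B))
theorem polar_anti {α : Type*} (T : α → α → Prop) {B C : Set α} (h : B ⊆ C) :
    polar T C ⊆ polar T B := fun _ hl l₁ hl₁ => hl l₁ (h hl₁)

theorem polar_union {α : Type*} (T : α → α → Prop) (B C : Set α) :
    polar T (B ∪ C) = polar T B ∩ polar T C := by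
  ext l; simp only [polar, Set.mem_setOf_eq, Set.mem_union, Set.mem_inter_iff]
  constructor
  · exact fun h => ⟨fun l₁ h₁ => h l₁ (Or.inl h₁), fun l₁ h₁ => h l₁ (Or.inr h₁)⟩
  · rintro ⟨h1, h2⟩ l₁ (h | h); exacts [h1 l₁ h, h2 l₁ h]

theorem subset_polar_polar {α : Type*} {T : α → α → Prop}
    (hsymm : SymmRel T) (hirr : IrreflRel T) (B : Set α) :
    B ⊆ polar T (polar T B) := by
  intro l hl l₁ hl₁
  by_cases h : l = l₁
  · exact absurd (h ▸ hl₁ l hl) (hirr l₁)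
  · exact (hsymm l l₁ h).mp (hl₁ l hl)

theorem polar_polar_polar {α : Type*} {T : α → α → Prop}
    (hsymm : SymmRel T) (hirr : IrreflRel T) (B : Set α) :
    polar T (polar T (polar T B)) = polar T B :=
  Set.Subset.antisymm (polar_anti T (subset_polar_polar hsymm hirr B))
    (subset_polar_polar hsymm hirr (polar T B))

theorem stmt3 {α : Type*} [Fintype α] [Nonempty α] (T : α → α → Prop)
    (hsymm : SymmRel T) (hirr : IrreflRel T) (hsat : SaturatedRel T) :
    ∀ Q ∈ PTup T, ∀ Q₁ ∈ PTup T, ∀ Q₂ ∈ PTup T,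
      Q₁ ⊆ polar T Q → Q₂ ⊆ polar T (polar T (polar T (Q ∪ Q₁))) →
      Q₂ ⊆ polar T Q₁ ∧
      Q ⊆ polar T (polar T (polar T (Q₁ ∪ Q₂))) ∧
      polar T (polar T (polar T (polar T (Q ∪ Q₁)) ∪ Q₂)) =
        polar T (polar T (Q ∪ Q₁ ∪ Q₂)) ∧
      polar T (polar T (Q ∪ Q₁ ∪ Q₂)) =
        polar T (polar T (Q ∪ polar T (polar T (Q₁ ∪ Q₂)))) := by
  intro Q _ Q₁ _ Q₂ _ h1 h2
  have ppp := polar_polar_polar hsymm hirr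
  have sub := subset_polar_polar hsymm hirr
  rw [ppp] at h2
  have hQ2Q1 : Q₂ ⊆ polar T Q₁ := h2.trans (by rw [polar_union]; exact Set.inter_subset_right)
  have hQ2Q : Q₂ ⊆ polar T Q := h2.trans (by rw [polar_union]; exact Set.inter_subset_left)
  refine ⟨hQ2Q1, ?_, ?_, ?_⟩
  · rw [ppp, polar_union]
    exact (sub Q).trans (Set.subset_inter (polar_anti T h1) (polar_anti T hQ2Q))
  · have : polar T (polar T (polar T (Q ∪ Q₁)) ∪ Q₂) = polar T (Q ∪ Q₁ ∪ Q₂) := by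
      rw [polar_union, ppp, ← polar_union, Set.union_assoc]
    rw [this]
  · have : polar T (Q ∪ Q₁ ∪ Q₂) = polar T (Q ∪ polar T (polar T (Q₁ ∪ Q₂))) := by
      rw [polar_union (T := T) Q (polar T (polar T (Q₁ ∪ Q₂))), ppp, ← polar_union,
        Set.union_assoc]
    rw [this]
end

section
/- Let V be a finite set with N := |V| divisible by 4, and let b, c : ZMod 4 → ZMod 2 satisfy c(0) + c(2) = b(0) + b(2) and c(1) + c(3) = b(1) + b(3). Then for every S ⊆ V there exists a bijection θ̂_S : A_b → A_b such that: (i) θ̂_S maps the fiber {(U, φ) : φ ∈ L_b(U)} onto the fiber {(T_S(U), ψ) : ψ ∈ L_b(T_S(U))} for every U ⊆ V, where T_S(U) := U if |U ∩ S| is even and T_S(U) := V ∖ (U Δ S) if |U ∩ S| is odd; and (ii) for all l, l₁ ∈ A_b, (l, l₁) ∈ T_c if and only if (θ̂_S(l), θ̂_S(l₁)) ∈ T_c. -/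
open scoped symmDiff

/-- `T_S(U) := U` if `|U ∩ S|` is even, and `T_S(U) := V ∖ (U Δ S)` if `|U ∩ S|` is odd. -/
def TSmap {V : Type*} [Fintype V] [DecidableEq V] (S U : Finset V) : Finset V :=
  if Even (U ∩ S).card then U else (U ∆ S)ᶜ

/-- `L_b(U) := {φ : V → ZMod 2 | ∑_{z ∈ U} φ z = b(|U| mod 4)}`. -/
def Lb {V : Type*} [DecidableEq V] (b : ZMod 4 → ZMod 2) (U : Finset V) :
    Set (V → ZMod 2) :=
  {φ | ∑ z ∈ U, φ z = b (U.card : ZMod 4)}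

/-- `A_b`: the disjoint union over `U ⊆ V` of the sets `L_b(U)`,
realized as the set of pairs `(U, φ)` with `φ ∈ L_b(U)`. -/
def AbGround (V : Type*) [DecidableEq V] (b : ZMod 4 → ZMod 2) : Type _ :=
  {p : Finset V × (V → ZMod 2) // p.2 ∈ Lb b p.1}

/-- The relation `T_c` on pairs `(U, φ)`: for equal first components it is `φ ≠ φ'`,
and for `U ≠ U₁` it is `∑_{z ∈ U Δ U₁} (φ z + φ₁ z) ≠ c(|U Δ U₁| mod 4)`. -/
def TcP {V : Type*} [DecidableEq V] (c : ZMod 4 → ZMod 2)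
    (p q : Finset V × (V → ZMod 2)) : Prop :=
  if p.1 = q.1 then p.2 ≠ q.2
  else ∑ z ∈ p.1 ∆ q.1, (p.2 z + q.2 z) ≠ c (((p.1 ∆ q.1).card : ZMod 4))

/-- The relation `T_c` on `A_b`. -/
def Tc {V : Type*} [DecidableEq V] (b : ZMod 4 → ZMod 2) (c : ZMod 4 → ZMod 2)
    (l l₁ : AbGround V b) : Prop :=
  TcP c l.1 l₁.1

/- ============== auxiliary development ============== -/

open Finset

section Helpers

private lemma two0 : (2 : ZMod 2) = 0 := by decide
private lemma sq2 : ∀ x : ZMod 2, x * x = x := by decide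

lemma zmod2_ne_iff : ∀ (a b a' b' : ZMod 2), a + b = a' + b' → ((a ≠ b) ↔ (a' ≠ b')) := by
  decide

variable {V : Type*} [DecidableEq V]

lemma sumZ2_symmDiff (A B : Finset V) (f : V → ZMod 2) :
    ∑ z ∈ A ∆ B, f z = ∑ z ∈ A, f z + ∑ z ∈ B, f z := by
  have h : A ∆ B = (A ∪ B) \ (A ∩ B) := by rw [symmDiff_eq_sup_sdiff_inf]; rfl
  have h2 : ∑ z ∈ A ∪ B, f z + ∑ z ∈ A ∩ B, f z = ∑ z ∈ A, f z + ∑ z ∈ B, f z :=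
    Finset.sum_union_inter
  have h3 : ∑ z ∈ (A ∪ B) \ (A ∩ B), f z = ∑ z ∈ A ∪ B, f z - ∑ z ∈ A ∩ B, f z :=
    Finset.sum_sdiff_eq_sub inter_subset_union
  rw [h, h3, ← h2]
  linear_combination (-(∑ z ∈ A ∩ B, f z)) * two0

lemma sumZ2_compl [Fintype V] (A : Finset V) (f : V → ZMod 2) :
    ∑ z ∈ Aᶜ, f z = ∑ z ∈ univ, f z + ∑ z ∈ A, f z := by
  rw [← Finset.sum_add_sum_compl A f]
  linear_combination (-(∑ z ∈ A, f z)) * two0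

lemma sum_indicator (W X : Finset V) (a : ZMod 2) :
    ∑ z ∈ W, a * (if z ∈ X then 1 else 0) = a * ((W ∩ X).card : ZMod 2) := by
  rw [← Finset.mul_sum]; congr 1
  rw [Finset.sum_ite_mem, Finset.sum_const, nsmul_eq_mul, mul_one]

lemma card_symmDiff_nat (A B : Finset V) :
    (A ∆ B).card + 2 * (A ∩ B).card = A.card + B.card := by
  have h : A ∆ B = (A ∪ B) \ (A ∩ B) := by rw [symmDiff_eq_sup_sdiff_inf]; rfl
  have h1 : (A ∩ B) ⊆ (A ∪ B) := inter_subset_union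
  have h2 := Finset.card_sdiff_of_subset h1
  have h3 := Finset.card_union_add_card_inter A B
  have h4 := Finset.card_le_card h1
  rw [h, h2]; omega

lemma cast_card_symmDiff {m : ℕ} [NeZero m] (A B : Finset V) :
    ((A ∆ B).card : ZMod m) = (A.card : ZMod m) + B.card - 2 * ((A ∩ B).card) := by
  have h := congrArg (Nat.cast : ℕ → ZMod m) (card_symmDiff_nat A B)
  push_cast at h
  linear_combination h

lemma cast2_card_symmDiff (A B : Finset V) :
    ((A ∆ B).card : ZMod 2) = (A.card : ZMod 2) + B.card := by
  rw [cast_card_symmDiff]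
  linear_combination (-((A ∩ B).card : ZMod 2)) * two0

lemma cast_card_compl {m : ℕ} [NeZero m] [Fintype V] (A : Finset V)
    (hm : m ∣ Fintype.card V) : ((Aᶜ).card : ZMod m) = -(A.card : ZMod m) := by
  have h := congrArg (Nat.cast : ℕ → ZMod m) (Finset.card_add_card_compl A)
  push_cast at h
  have h0 : ((Fintype.card V : ℕ) : ZMod m) = 0 :=
    (ZMod.natCast_eq_zero_iff _ _).mpr hm
  rw [h0] at h
  linear_combination h

lemma even_cast2 {n : ℕ} (h : Even n) : (n : ZMod 2) = 0 := by
  rw [ZMod.natCast_eq_zero_iff]; exact even_iff_two_dvd.mp h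

lemma odd_cast2 {n : ℕ} (h : ¬ Even n) : (n : ZMod 2) = 1 := by
  rw [Nat.not_even_iff_odd] at h
  obtain ⟨j, hj⟩ := h; subst hj; push_cast
  rw [two0]; ring

lemma odd_two_mul_cast4 {n : ℕ} (h : ¬ Even n) : 2 * (n : ZMod 4) = 2 := by
  rw [Nat.not_even_iff_odd] at h
  obtain ⟨j, hj⟩ := h; subst hj; push_cast
  have h4 : (4 : ZMod 4) = 0 := by decide
  linear_combination (j : ZMod 4) * h4

lemma stmt13_inter1 [Fintype V] (U S : Finset V) : (U ∆ S)ᶜ ∩ S = U ∩ S := by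
  ext z; simp only [Finset.mem_inter, Finset.mem_compl, Finset.mem_symmDiff]; tauto

lemma stmt13_inter2 [Fintype V] (U S : Finset V) : (U ∆ S)ᶜ ∩ U = U ∩ S := by
  ext z; simp only [Finset.mem_inter, Finset.mem_compl, Finset.mem_symmDiff]; tauto

lemma stmt13_sdc [Fintype V] (A B : Finset V) : A ∆ Bᶜ = (A ∆ B)ᶜ := by
  ext z; simp only [Finset.mem_compl, Finset.mem_symmDiff]; tauto

lemma stmt13_csc [Fintype V] (A B : Finset V) : Aᶜ ∆ Bᶜ = A ∆ B := by
  ext z; simp only [Finset.mem_compl, Finset.mem_symmDiff]; tauto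

lemma stmt13_scc [Fintype V] (U S : Finset V) : ((U ∆ S)ᶜ ∆ S)ᶜ = U := by
  ext z; simp only [Finset.mem_compl, Finset.mem_symmDiff]; tauto

lemma stmt13_interdist (X A B : Finset V) : X ∩ (A ∆ B) = (X ∩ A) ∆ (X ∩ B) := by
  ext z; simp only [Finset.mem_inter, Finset.mem_symmDiff]; tauto

lemma stmt13_interS (U U₁ S : Finset V) : (U ∆ U₁) ∩ S = (U ∩ S) ∆ (U₁ ∩ S) := by
  ext z; simp only [Finset.mem_inter, Finset.mem_symmDiff]; tauto

lemma stmt13_cancelS [Fintype V] (U U₁ S : Finset V) : (U ∆ S) ∆ (U₁ ∆ S) = U ∆ U₁ := by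
  ext z; simp only [Finset.mem_symmDiff]; tauto

lemma stmt13_sdiff2 (U U₁ : Finset V) : U₁ ∩ (U ∆ U₁) = U₁ \ U := by
  ext z; simp only [Finset.mem_inter, Finset.mem_sdiff, Finset.mem_symmDiff]; tauto

lemma stmt13_interD1 (U U₁ : Finset V) : (U ∆ U₁) ∩ U = U \ U₁ := by
  ext z; simp only [Finset.mem_inter, Finset.mem_sdiff, Finset.mem_symmDiff]; tauto

lemma stmt13_interD2 (U U₁ : Finset V) : (U ∆ U₁) ∩ U₁ = U₁ \ U := by
  ext z; simp only [Finset.mem_inter, Finset.mem_sdiff, Finset.mem_symmDiff]; tauto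

lemma cast2_card_sdiff (X A : Finset V) :
    ((X \ A).card : ZMod 2) = (X.card : ZMod 2) + ((X ∩ A).card : ZMod 2) := by
  have h := congrArg (Nat.cast : ℕ → ZMod 2) (Finset.card_sdiff_add_card_inter X A)
  push_cast at h
  linear_combination h + (-((X ∩ A).card : ZMod 2)) * two0

lemma cast2_card_compl_inter [Fintype V] (A X : Finset V) :
    ((Aᶜ ∩ X).card : ZMod 2) = (X.card : ZMod 2) + ((X ∩ A).card : ZMod 2) := by
  have hset : Aᶜ ∩ X = X \ A := by
    ext z; simp only [Finset.mem_inter, Finset.mem_compl, Finset.mem_sdiff]; tauto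
  rw [hset, cast2_card_sdiff]

lemma odd_of_cast2_one {n : ℕ} (h : (n : ZMod 2) = 1) : ¬ Even n := by
  intro he; rw [even_cast2 he] at h; exact absurd h (by decide)

lemma TSmap_invol [Fintype V] (S U : Finset V) : TSmap S (TSmap S U) = U := by
  unfold TSmap
  by_cases h : Even (U ∩ S).card
  · simp [h]
  · simp only [h, if_false]
    rw [stmt13_inter1]
    simp only [h, if_false]
    exact stmt13_scc U S

lemma TSmap_inj [Fintype V] (S : Finset V) {U U₁ : Finset V}
    (h : TSmap S U = TSmap S U₁) : U = U₁ := by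
  have h2 := congrArg (TSmap S) h
  rwa [TSmap_invol, TSmap_invol] at h2

end Helpers

/- ============== the key arithmetic fact ============== -/

def look4 (x0 x1 x2 x3 : ZMod 2) : ZMod 4 → ZMod 2 :=
  fun i => if i = 0 then x0 else if i = 1 then x1 else if i = 2 then x2 else x3

def par2 : ZMod 4 → ZMod 2 := fun x => (x.val : ZMod 2)

lemma look4_eq (b : ZMod 4 → ZMod 2) (x : ZMod 4) :
    look4 (b 0) (b 1) (b 2) (b 3) x = b x := by
  fin_cases x <;> rfl

lemma par2_natCast (n : ℕ) : par2 ((n : ℕ) : ZMod 4) = (n : ZMod 2) := by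
  unfold par2
  rw [ZMod.val_natCast]
  conv_rhs => rw [← Nat.div_add_mod n 4]
  push_cast
  have h4 : (4 : ZMod 2) = 0 := by decide
  rw [h4]; ring

set_option maxRecDepth 100000 in
set_option maxHeartbeats 2000000 in
lemma master' (b0 b1 b2 b3 c0 c1 c2 c3 : ZMod 2)
    (h02 : c0 + c2 = b0 + b2) (h13 : c1 + c3 = b1 + b3)
    (u u1 s k : ZMod 4) :
    (look4 c0 c1 c2 c3) u + (look4 c0 c1 c2 c3) (2-u-s) + b0 + (look4 b0 b1 b2 b3) (2-s)
      + (look4 b0 b1 b2 b3) u1 + (look4 b0 b1 b2 b3) (2-u1-s)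
      + (look4 c0 c1 c2 c3) (2 - (u+u1-2*k) - s) + (look4 c0 c1 c2 c3) (u+u1-2*k)
      + ((b0 + b1 + b2 + b3) * par2 s) * (par2 k + par2 u * par2 u1) = 0 := by
  revert h02 h13 u u1 s k
  revert b0 b1 b2 b3 c0 c1 c2 c3
  decide

lemma master (b c : ZMod 4 → ZMod 2)
    (h02 : c 0 + c 2 = b 0 + b 2) (h13 : c 1 + c 3 = b 1 + b 3)
    (u u1 s k : ZMod 4) :
    c u + c (2-u-s) + b 0 + b (2-s) + b u1 + b (2-u1-s)
      + c (2 - (u+u1-2*k) - s) + c (u+u1-2*k)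
      + ((b 0 + b 1 + b 2 + b 3) * par2 s) * (par2 k + par2 u * par2 u1) = 0 := by
  have h := master' (b 0) (b 1) (b 2) (b 3) (c 0) (c 1) (c 2) (c 3) h02 h13 u u1 s k
  simpa only [look4_eq] using h

/- ============== the construction ============== -/

section Main
variable {V : Type*} [DecidableEq V]

def lamBC (b : ZMod 4 → ZMod 2) (S : Finset V) : ZMod 2 :=
  (b 0 + b 1 + b 2 + b 3) * ((S.card : ℕ) : ZMod 2)

def coefA (b : ZMod 4 → ZMod 2) (S U : Finset V) : ZMod 2 :=
  if Even (U ∩ S).card then 0 else lamBC b S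

def coefD (b : ZMod 4 → ZMod 2) (S U : Finset V) : ZMod 2 :=
  if Even (U ∩ S).card then 0 else lamBC b S * ((U.card : ℕ) : ZMod 2)

def rhoF (b c : ZMod 4 → ZMod 2) (S U : Finset V) : ZMod 2 :=
  if Even (U ∩ S).card then
    c ((U.card : ℕ) : ZMod 4) + c (2 - ((U.card : ℕ) : ZMod 4) - ((S.card : ℕ) : ZMod 4))
      + b 0 + b (2 - ((S.card : ℕ) : ZMod 4))
  else
    b ((U.card : ℕ) : ZMod 4) + b (2 - ((U.card : ℕ) : ZMod 4) - ((S.card : ℕ) : ZMod 4))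
      + lamBC b S * (1 + ((U.card : ℕ) : ZMod 2) + ((U.card : ℕ) : ZMod 2) * ((S.card : ℕ) : ZMod 2))

def epsF [Fintype V] (b c : ZMod 4 → ZMod 2) (S : Finset V) (p : Finset V × (V → ZMod 2)) : ZMod 2 :=
  (∑ z ∈ Sᶜ, p.2 z) + rhoF b c S p.1

def psiF [Fintype V] (b c : ZMod 4 → ZMod 2) (S : Finset V) (p : Finset V × (V → ZMod 2)) :
    V → ZMod 2 :=
  fun z => p.2 z + coefA b S p.1 * (if z ∈ p.1 then 1 else 0) + coefD b S p.1
    + epsF b c S p * (if z ∈ S then 1 else 0)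

lemma sum_psi [Fintype V] (b c : ZMod 4 → ZMod 2) (S : Finset V)
    (p : Finset V × (V → ZMod 2)) (W : Finset V) :
    ∑ z ∈ W, psiF b c S p z
      = ∑ z ∈ W, p.2 z + coefA b S p.1 * ((W ∩ p.1).card : ZMod 2)
        + coefD b S p.1 * ((W.card : ℕ) : ZMod 2)
        + epsF b c S p * ((W ∩ S).card : ZMod 2) := by
  unfold psiF
  rw [Finset.sum_add_distrib, Finset.sum_add_distrib, Finset.sum_add_distrib,
    sum_indicator, sum_indicator, Finset.sum_const, nsmul_eq_mul]; ring

lemma mem_psi [Fintype V] (h4 : 4 ∣ Fintype.card V) (b c : ZMod 4 → ZMod 2) (S : Finset V)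
    (p : Finset V × (V → ZMod 2)) (hp : ∑ z ∈ p.1, p.2 z = b ((p.1.card : ℕ) : ZMod 4)) :
    ∑ z ∈ TSmap S p.1, psiF b c S p z = b (((TSmap S p.1).card : ℕ) : ZMod 4) := by
  obtain ⟨U, φ⟩ := p
  simp only at hp ⊢
  have h2N : 2 ∣ Fintype.card V := dvd_trans (by norm_num) h4
  unfold TSmap
  by_cases h : Even (U ∩ S).card
  · rw [if_pos h, sum_psi]
    simp only [coefA, coefD, if_pos h]
    rw [even_cast2 h]
    simpa using hp
  · rw [if_neg h, sum_psi]
    simp only [coefA, coefD, rhoF, epsF, if_neg h]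
    rw [stmt13_inter1, stmt13_inter2]
    rw [sumZ2_compl, sumZ2_symmDiff, hp, ← Finset.sum_add_sum_compl S φ]
    rw [odd_cast2 h, cast_card_compl _ h2N, cast2_card_symmDiff,
      cast_card_compl _ h4, cast_card_symmDiff, odd_two_mul_cast4 h]
    ring_nf
    set u2 := ((U.card : ℕ) : ZMod 2)
    set lam := lamBC b S
    linear_combination (∑ z ∈ S, φ z + ∑ z ∈ Sᶜ, φ z + b ((U.card : ℕ) : ZMod 4) + lam) * two0
      - lam * (sq2 u2)

lemma keyshift_ee [Fintype V] (b c : ZMod 4 → ZMod 2) (S : Finset V)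
    (p q : Finset V × (V → ZMod 2))
    (hU : Even ((p.1 ∩ S).card)) (hU₁ : Even ((q.1 ∩ S).card)) :
    ∑ z ∈ TSmap S p.1 ∆ TSmap S q.1, (psiF b c S p z + psiF b c S q z)
        + c (((TSmap S p.1 ∆ TSmap S q.1).card : ℕ) : ZMod 4)
      = ∑ z ∈ p.1 ∆ q.1, (p.2 z + q.2 z) + c (((p.1 ∆ q.1).card : ℕ) : ZMod 4) := by
  obtain ⟨U, φ⟩ := p; obtain ⟨U₁, φ₁⟩ := q
  simp only at hU hU₁ ⊢
  unfold TSmap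
  rw [if_pos hU, if_pos hU₁]
  rw [Finset.sum_add_distrib, sum_psi, sum_psi, Finset.sum_add_distrib]
  simp only [coefA, coefD, if_pos hU, if_pos hU₁]
  rw [stmt13_interS U U₁ S, cast2_card_symmDiff (U ∩ S) (U₁ ∩ S), even_cast2 hU, even_cast2 hU₁]
  ring

lemma keyshift_oo [Fintype V] (b c : ZMod 4 → ZMod 2) (S : Finset V)
    (p q : Finset V × (V → ZMod 2))
    (hU : ¬ Even ((p.1 ∩ S).card)) (hU₁ : ¬ Even ((q.1 ∩ S).card)) :
    ∑ z ∈ TSmap S p.1 ∆ TSmap S q.1, (psiF b c S p z + psiF b c S q z)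
        + c (((TSmap S p.1 ∆ TSmap S q.1).card : ℕ) : ZMod 4)
      = ∑ z ∈ p.1 ∆ q.1, (p.2 z + q.2 z) + c (((p.1 ∆ q.1).card : ℕ) : ZMod 4) := by
  obtain ⟨U, φ⟩ := p; obtain ⟨U₁, φ₁⟩ := q
  simp only at hU hU₁ ⊢
  unfold TSmap
  rw [if_neg hU, if_neg hU₁, stmt13_csc, stmt13_cancelS]
  rw [Finset.sum_add_distrib, sum_psi, sum_psi, Finset.sum_add_distrib]
  simp only [coefA, coefD, if_neg hU, if_neg hU₁]
  rw [stmt13_interS U U₁ S, cast2_card_symmDiff ((U ∩ S)) ((U₁ ∩ S)),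
    odd_cast2 hU, odd_cast2 hU₁,
    stmt13_interD1 U U₁, stmt13_interD2 U U₁,
    cast2_card_sdiff U U₁, cast2_card_sdiff U₁ U, inter_comm U₁ U,
    cast2_card_symmDiff U U₁]
  set u2 := ((U.card : ℕ) : ZMod 2)
  set u12 := ((U₁.card : ℕ) : ZMod 2)
  set k2 := (((U ∩ U₁).card : ℕ) : ZMod 2)
  set lam := lamBC b S
  linear_combination (epsF b c S (U, φ) + epsF b c S (U₁, φ₁) + lam * k2) * two0
    - lam * (sq2 u2) - lam * (sq2 u12)
    + (lam * u2 * u12 + lam * u2^2 + lam * u12^2) * two0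

lemma keyshift_eo [Fintype V] (h4 : 4 ∣ Fintype.card V) (b c : ZMod 4 → ZMod 2)
    (h02 : c 0 + c 2 = b 0 + b 2) (h13 : c 1 + c 3 = b 1 + b 3) (S : Finset V)
    (p q : Finset V × (V → ZMod 2))
    (hU : Even ((p.1 ∩ S).card)) (hU₁ : ¬ Even ((q.1 ∩ S).card)) :
    ∑ z ∈ TSmap S p.1 ∆ TSmap S q.1, (psiF b c S p z + psiF b c S q z)
        + c (((TSmap S p.1 ∆ TSmap S q.1).card : ℕ) : ZMod 4)
      = ∑ z ∈ p.1 ∆ q.1, (p.2 z + q.2 z) + c (((p.1 ∆ q.1).card : ℕ) : ZMod 4) := by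
  obtain ⟨U, φ⟩ := p; obtain ⟨U₁, φ₁⟩ := q
  simp only at hU hU₁ ⊢
  have h2N : 2 ∣ Fintype.card V := dvd_trans (by norm_num) h4
  have hDS1 : ((((U ∆ U₁) ∩ S).card : ℕ) : ZMod 2) = 1 := by
    rw [stmt13_interS U U₁ S, cast2_card_symmDiff (U ∩ S) (U₁ ∩ S),
      even_cast2 hU, odd_cast2 hU₁]; ring
  have hDSodd : ¬ Even ((U ∆ U₁) ∩ S).card := odd_of_cast2_one hDS1
  unfold TSmap
  rw [if_pos hU, if_neg hU₁]
  have hset : U ∆ (U₁ ∆ S)ᶜ = ((U ∆ U₁) ∆ S)ᶜ := by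
    rw [stmt13_sdc, ← symmDiff_assoc]
  rw [hset]
  have hc4 : (((((U ∆ U₁) ∆ S)ᶜ).card : ℕ) : ZMod 4)
      = 2 - (((U ∆ U₁).card : ℕ) : ZMod 4) - ((S.card : ℕ) : ZMod 4) := by
    rw [cast_card_compl (m := 4) _ h4, cast_card_symmDiff (m := 4) (U ∆ U₁) S,
      odd_two_mul_cast4 hDSodd]; ring
  rw [hc4]
  rw [Finset.sum_add_distrib, sum_psi, sum_psi, Finset.sum_add_distrib]
  simp only [coefA, coefD, epsF, rhoF, if_pos hU, if_neg hU₁]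
  rw [sumZ2_compl ((U ∆ U₁) ∆ S) φ, sumZ2_compl ((U ∆ U₁) ∆ S) φ₁,
    sumZ2_symmDiff (U ∆ U₁) S φ, sumZ2_symmDiff (U ∆ U₁) S φ₁,
    ← Finset.sum_add_sum_compl S φ, ← Finset.sum_add_sum_compl S φ₁]
  rw [cast2_card_compl_inter ((U ∆ U₁) ∆ S) U₁,
    stmt13_interdist U₁ (U ∆ U₁) S,
    cast2_card_symmDiff (U₁ ∩ (U ∆ U₁)) (U₁ ∩ S),
    stmt13_sdiff2 U U₁, cast2_card_sdiff U₁ U, inter_comm U₁ U,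
    stmt13_inter1 (U ∆ U₁) S, stmt13_interS U U₁ S,
    cast2_card_symmDiff (U ∩ S) (U₁ ∩ S),
    even_cast2 hU, odd_cast2 hU₁,
    cast_card_compl (m := 2) _ h2N,
    cast2_card_symmDiff (U ∆ U₁) S,
    cast2_card_symmDiff U U₁,
    cast_card_symmDiff (m := 4) U U₁]
  simp only [lamBC]
  have hM := master b c h02 h13 ((U.card : ℕ) : ZMod 4) ((U₁.card : ℕ) : ZMod 4)
    ((S.card : ℕ) : ZMod 4) (((U ∩ U₁).card : ℕ) : ZMod 4)
  simp only [par2_natCast] at hM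
  set u2 := ((U.card : ℕ) : ZMod 2)
  set u12 := ((U₁.card : ℕ) : ZMod 2)
  set s2 := ((S.card : ℕ) : ZMod 2)
  set k2 := (((U ∩ U₁).card : ℕ) : ZMod 2)
  linear_combination hM
    - ((b 0 + b 1 + b 2 + b 3) * s2) * (sq2 u12)
    + (∑ i ∈ S, φ i + ∑ i ∈ Sᶜ, φ i + ∑ i ∈ S, φ₁ i + ∑ i ∈ Sᶜ, φ₁ i
       - c (((U.card : ℕ) : ZMod 4) + ((U₁.card : ℕ) : ZMod 4) - 2 * (((U ∩ U₁).card : ℕ) : ZMod 4))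
       - u2 * u12 * s2 * (b 0 + b 1 + b 2 + b 3)
       + u12 * s2 * (b 0 + b 1 + b 2 + b 3)
       + s2 * (b 0 + b 1 + b 2 + b 3)) * two0

lemma keyshift [Fintype V] (h4 : 4 ∣ Fintype.card V) (b c : ZMod 4 → ZMod 2)
    (h02 : c 0 + c 2 = b 0 + b 2) (h13 : c 1 + c 3 = b 1 + b 3) (S : Finset V)
    (p q : Finset V × (V → ZMod 2)) :
    ∑ z ∈ TSmap S p.1 ∆ TSmap S q.1, (psiF b c S p z + psiF b c S q z)
        + c (((TSmap S p.1 ∆ TSmap S q.1).card : ℕ) : ZMod 4)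
      = ∑ z ∈ p.1 ∆ q.1, (p.2 z + q.2 z) + c (((p.1 ∆ q.1).card : ℕ) : ZMod 4) := by
  by_cases hU : Even ((p.1 ∩ S).card) <;> by_cases hU₁ : Even ((q.1 ∩ S).card)
  · exact keyshift_ee b c S p q hU hU₁
  · exact keyshift_eo h4 b c h02 h13 S p q hU hU₁
  · have h := keyshift_eo h4 b c h02 h13 S q p hU₁ hU
    rw [symmDiff_comm (TSmap S q.1) (TSmap S p.1), symmDiff_comm q.1 p.1] at h
    have e1 : ∑ z ∈ TSmap S p.1 ∆ TSmap S q.1, (psiF b c S q z + psiF b c S p z)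
        = ∑ z ∈ TSmap S p.1 ∆ TSmap S q.1, (psiF b c S p z + psiF b c S q z) :=
      Finset.sum_congr rfl fun z _ => add_comm _ _
    have e2 : ∑ z ∈ p.1 ∆ q.1, (q.2 z + p.2 z) = ∑ z ∈ p.1 ∆ q.1, (p.2 z + q.2 z) :=
      Finset.sum_congr rfl fun z _ => add_comm _ _
    rw [e1, e2] at h
    exact h
  · exact keyshift_oo b c S p q hU hU₁

lemma psi_cancel [Fintype V] (b c : ZMod 4 → ZMod 2) (S : Finset V)
    (p q : Finset V × (V → ZMod 2)) (h1 : p.1 = q.1)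
    (h2 : psiF b c S p = psiF b c S q) : p.2 = q.2 := by
  obtain ⟨U, φ⟩ := p; obtain ⟨U₁, φ₁⟩ := q
  simp only at h1 ⊢
  subst h1
  have hoff : ∀ z, z ∉ S → φ z = φ₁ z := by
    intro z hz
    have h := congrFun h2 z
    simp only [psiF, if_neg hz, mul_zero, add_zero] at h
    exact add_right_cancel (add_right_cancel h)
  have ht : ∑ z ∈ Sᶜ, φ z = ∑ z ∈ Sᶜ, φ₁ z :=
    Finset.sum_congr rfl fun z hz => hoff z (Finset.mem_compl.mp hz)
  have heps : epsF b c S (U, φ) = epsF b c S (U, φ₁) := by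
    unfold epsF; simp only; rw [ht]
  funext z
  have h := congrFun h2 z
  simp only [psiF] at h
  rw [heps] at h
  exact add_right_cancel (add_right_cancel (add_right_cancel h))

end Main

theorem stmt13 {V : Type*} [Fintype V] [DecidableEq V]
    (h4 : 4 ∣ Fintype.card V) (b c : ZMod 4 → ZMod 2)
    (hbc02 : c 0 + c 2 = b 0 + b 2) (hbc13 : c 1 + c 3 = b 1 + b 3) :
    ∀ S : Finset V, ∃ θ : AbGround V b ≃ AbGround V b,
      (∀ l : AbGround V b, (θ l).1.1 = TSmap S l.1.1) ∧
      (∀ l l₁ : AbGround V b, Tc b c l l₁ ↔ Tc b c (θ l) (θ l₁)) := by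
  intro S
  classical
  have hfin : Finite (AbGround V b) := by unfold AbGround; infer_instance
  set Θ : AbGround V b → AbGround V b := fun l =>
    ⟨(TSmap S l.1.1, psiF b c S l.1), mem_psi h4 b c S l.1 l.2⟩ with hΘ
  have hinj : Function.Injective Θ := by
    intro l l₁ h
    have h' : (Θ l).1 = (Θ l₁).1 := congrArg Subtype.val h
    have h1 : TSmap S l.1.1 = TSmap S l₁.1.1 := congrArg Prod.fst h'
    have h2 : psiF b c S l.1 = psiF b c S l₁.1 := congrArg Prod.snd h'
    have hUU : l.1.1 = l₁.1.1 := TSmap_inj S h1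
    exact Subtype.ext (Prod.ext hUU (psi_cancel b c S l.1 l₁.1 hUU h2))
  have hbij : Function.Bijective Θ := (Finite.injective_iff_bijective).mp hinj
  refine ⟨Equiv.ofBijective Θ hbij, fun l => rfl, fun l l₁ => ?_⟩
  have hv : ∀ l : AbGround V b,
      ((Equiv.ofBijective Θ hbij) l).1 = (TSmap S l.1.1, psiF b c S l.1) := fun _ => rfl
  unfold Tc
  rw [hv, hv]
  unfold TcP
  simp only
  by_cases hU : l.1.1 = l₁.1.1
  · rw [if_pos hU, if_pos (by rw [hU])]
    have hiff : l.1.2 = l₁.1.2 ↔ psiF b c S l.1 = psiF b c S l₁.1 := by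
      constructor
      · intro h
        have : l.1 = l₁.1 := Prod.ext hU h
        rw [this]
      · intro h
        exact psi_cancel b c S l.1 l₁.1 hU h
    exact not_congr hiff
  · rw [if_neg hU, if_neg (fun hc => hU (TSmap_inj S hc))]
    exact zmod2_ne_iff _ _ _ _
      (keyshift h4 b c hbc02 hbc13 S l.1 l₁.1).symm
end
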